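/- The set of ordered partitions of [n] all of whose left-to-right minima occur at odd locations is in bijection with the set of signed permutations of [n] with decreasing blocks all of whose left-to-right minima have positive signs. The bijection sends (A_1,...,A_k) to the permutation obtained by listing the elements of each A_i in decreasing order and concatenating, where all elements of A_i receive sign (-1)^{i-1}. -/

import Mathlib

/-- The union `A₁ ∪ ⋯ ∪ A_{i+1}` of the first `i+1` blocks (0-indexed `i`). -/
def prefixUnion (n : ℕ) (L : List (Finset (Fin n))) (i : ℕ) : Finset (Fin n) :=
  (L.take (i + 1)).foldr (· ∪ ·) ∅

/-- `L` is an ordered partition of `[n]`: a sequence of disjoint nonempty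
subsets whose union is `[n]`. -/
def IsOP (n : ℕ) (L : List (Finset (Fin n))) : Prop :=
  (∀ A ∈ L, A.Nonempty) ∧ L.Pairwise Disjoint ∧ L.foldr (· ∪ ·) ∅ = Finset.univ

/-- All left-to-right minima of the ordered partition `L` occur at odd
(1-indexed) locations: for each `i`, the minimum `m` of `A₁ ∪ ⋯ ∪ A_{i+1}`
lies in a block of even 0-index (odd 1-index). -/
def OddMinima (n : ℕ) (L : List (Finset (Fin n))) : Prop :=
  ∀ i, i < L.length → ∀ m : Fin n,
    (m ∈ prefixUnion n L i ∧ ∀ x ∈ prefixUnion n L i, m ≤ x) →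
    ∃ j, ∃ hj : j < L.length, Even j ∧ m ∈ L.get ⟨j, hj⟩

/-- A signed permutation of `[n]`, presented as a list of (value, sign) pairs. -/
def IsSP (n : ℕ) (l : List (Fin n × Bool)) : Prop :=
  l.length = n ∧ (l.map Prod.fst).Nodup

/-- Decreasing blocks: adjacent entries with the same sign are decreasing. -/
def DecBlocks (n : ℕ) (l : List (Fin n × Bool)) : Prop :=
  ∀ i, (h : i + 1 < l.length) →
    (l[i]'(Nat.lt_of_succ_lt h)).2 = (l[i + 1]'h).2 →
    (l[i + 1]'h).1 < (l[i]'(Nat.lt_of_succ_lt h)).1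

/-- All left-to-right minima of the signed permutation `l` have positive sign:
for each `i`, the minimum `m` of the first `i+1` values carries sign `+`. -/
def MinPosL (n : ℕ) (l : List (Fin n × Bool)) : Prop :=
  ∀ i, i < l.length → ∀ m : Fin n,
    (m ∈ (l.take (i + 1)).map Prod.fst ∧ ∀ x ∈ (l.take (i + 1)).map Prod.fst, m ≤ x) →
    (m, true) ∈ l

/-- The map sending an ordered partition `(A₁,…,A_k)` to the signed permutation
obtained by listing the elements of each `Aᵢ` in decreasing order and
concatenating, all elements of `Aᵢ` receiving sign `(-1)^{i-1}` (positive for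
odd 1-indexed, i.e. even 0-indexed, blocks). -/
def opToSigned (n : ℕ) (L : List (Finset (Fin n))) : List (Fin n × Bool) :=
  (L.zipIdx.map fun p => ((p.1.sort (· ≤ ·)).reverse.map fun v => (v, p.2 % 2 == 0))).flatten

namespace OpSp

variable {n : ℕ}

/-- elements of a finset in decreasing order -/
def desc (A : Finset (Fin n)) : List (Fin n) := (A.sort (· ≤ ·)).reverse

@[simp] lemma mem_desc {A : Finset (Fin n)} {x : Fin n} : x ∈ desc A ↔ x ∈ A := by
  simp [desc, Finset.mem_sort]

lemma desc_nodup (A : Finset (Fin n)) : (desc A).Nodup := by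
  simpa [desc] using Finset.sort_nodup _ A

lemma desc_ne_nil {A : Finset (Fin n)} (h : A.Nonempty) : desc A ≠ [] := by
  obtain ⟨x, hx⟩ := h
  exact List.ne_nil_of_mem (mem_desc.2 hx)

/-- alternating-sign builder -/
def go (b : Bool) : List (Finset (Fin n)) → List (Fin n × Bool)
  | [] => []
  | A :: T => (desc A).map (fun v => (v, b)) ++ go (!b) T

lemma opAux : ∀ (k : ℕ) (L : List (Finset (Fin n))),
    ((L.zipIdx k).map fun p =>
      ((p.1.sort (· ≤ ·)).reverse.map fun v => (v, p.2 % 2 == 0))).flatten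
      = go (k % 2 == 0) L := by
  intro k L
  induction L generalizing k with
  | nil => rfl
  | cons A T ih =>
    have h2 : ((k + 1) % 2 == 0) = !(k % 2 == 0) := by
      rcases Nat.mod_two_eq_zero_or_one k with h | h <;> simp [Nat.add_mod, h]
    rw [List.zipIdx_cons, List.map_cons, List.flatten_cons, ih (k + 1), h2]; rfl

lemma opToSigned_eq_go (L : List (Finset (Fin n))) : opToSigned n L = go true L := by
  have := opAux (n := n) 0 L
  simpa [opToSigned] using this

lemma go_map_fst (b : Bool) (L : List (Finset (Fin n))) :
    (go b L).map Prod.fst = (L.map desc).flatten := by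
  induction L generalizing b with
  | nil => rfl
  | cons A T ih => simp [go, ih, Function.comp_def]

lemma mem_foldr_union {L : List (Finset (Fin n))} {x : Fin n} :
    x ∈ L.foldr (· ∪ ·) ∅ ↔ ∃ A ∈ L, x ∈ A := by
  induction L with
  | nil => simp
  | cons A T ih => simp [ih]

lemma go_length {L : List (Finset (Fin n))} (hd : L.Pairwise Disjoint) (b : Bool) :
    (go b L).length = (L.foldr (· ∪ ·) ∅).card := by
  induction L generalizing b with
  | nil => simp [go]
  | cons A T ih =>
    rw [List.pairwise_cons] at hd
    have hdis : Disjoint A (T.foldr (· ∪ ·) ∅) := by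
      rw [Finset.disjoint_left]
      intro x hxA hxU
      obtain ⟨B, hB, hxB⟩ := mem_foldr_union.1 hxU
      exact (Finset.disjoint_left.1 (hd.1 B hB) hxA) hxB
    simp [go, ih hd.2, Finset.card_union_of_disjoint hdis, desc]

lemma blocks_disjoint_getElem {L : List (Finset (Fin n))} (hd : L.Pairwise Disjoint)
    {i j : ℕ} (hi : i < L.length) (hj : j < L.length) {m : Fin n}
    (hmi : m ∈ L[i]) (hmj : m ∈ L[j]) : i = j := by
  by_contra hne
  rcases Nat.lt_or_ge i j with h | h
  · exact (Finset.disjoint_left.1 (List.pairwise_iff_getElem.1 hd i j hi hj h) hmi) hmj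
  · have h' : j < i := lt_of_le_of_ne h (Ne.symm hne)
    exact (Finset.disjoint_left.1 (List.pairwise_iff_getElem.1 hd j i hj hi h') hmj) hmi

lemma mem_go_of {L : List (Finset (Fin n))} {i : ℕ} (hi : i < L.length) {m : Fin n}
    (hm : m ∈ L[i]) (b : Bool) : (m, b == decide (i % 2 = 0)) ∈ go b L := by
  induction L generalizing i b with
  | nil => simp at hi
  | cons A T ih =>
    cases i with
    | zero =>
      simp only [List.getElem_cons_zero] at hm
      simp only [go, List.mem_append, List.mem_map]
      exact Or.inl ⟨m, mem_desc.2 hm, by simp⟩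
    | succ i =>
      simp only [List.getElem_cons_succ] at hm
      have hi' : i < T.length := by simpa using hi
      have := ih hi' hm (!b)
      have hb : ((!b) == decide (i % 2 = 0)) = (b == decide ((i + 1) % 2 = 0)) := by
        rcases Nat.mod_two_eq_zero_or_one i with h | h <;>
          simp [Nat.add_mod, h] <;> cases b <;> rfl
      rw [hb] at this
      simp only [go, List.mem_append]
      exact Or.inr this

lemma of_mem_go {L : List (Finset (Fin n))} {m : Fin n} {c b : Bool}
    (h : (m, c) ∈ go b L) :
    ∃ i, ∃ hi : i < L.length, m ∈ L[i] ∧ c = (b == decide (i % 2 = 0)) := by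
  induction L generalizing b with
  | nil => simp [go] at h
  | cons A T ih =>
    simp only [go, List.mem_append, List.mem_map] at h
    rcases h with ⟨v, hv, hve⟩ | h
    · cases hve
      exact ⟨0, by simp, by simpa using mem_desc.1 hv, by simp⟩
    · obtain ⟨i, hi, hmi, hc⟩ := ih h
      refine ⟨i + 1, by simpa using hi, by simpa using hmi, ?_⟩
      rw [hc]
      rcases Nat.mod_two_eq_zero_or_one i with h2 | h2 <;>
        simp [Nat.add_mod, h2] <;> cases b <;> rfl

/-- the relation of `DecBlocks` -/
def DR : (Fin n × Bool) → (Fin n × Bool) → Prop := fun p q => p.2 = q.2 → q.1 < p.1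

lemma decBlocks_iff_chain' {l : List (Fin n × Bool)} :
    DecBlocks n l ↔ List.Chain' DR l := by
  constructor
  · intro h
    rw [List.Chain', List.isChain_iff_getElem]
    intro i hi
    exact fun hs => h i (by omega) hs
  · intro h i hi hs
    exact List.isChain_iff_getElem.1 h i (by omega) hs

lemma go_head?_sign {L : List (Finset (Fin n))} (hne : ∀ A ∈ L, A.Nonempty) (b : Bool) :
    ∀ y ∈ (go b L).head?, y.2 = b := by
  cases L with
  | nil => exact fun y hy => absurd hy (by rw [show go b ([] : List (Finset (Fin n))) = [] from rfl]; simp)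
  | cons A T =>
    cases hA : desc A with
    | nil => exact absurd hA (desc_ne_nil (hne A (by simp)))
    | cons v d =>
      intro y hy
      simp [go, hA] at hy
      rw [← hy]

lemma go_chain' {L : List (Finset (Fin n))} (hne : ∀ A ∈ L, A.Nonempty) (b : Bool) :
    List.Chain' DR (go b L) := by
  induction L generalizing b with
  | nil => exact List.isChain_nil
  | cons A T ih =>
    have h1 : List.Chain' DR ((desc A).map (fun v => (v, b))) := by
      rw [List.Chain', List.isChain_map]
      have hp : List.Pairwise (fun x y : Fin n => y < x) (desc A) := by
        rw [desc, List.pairwise_reverse]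
        exact (Finset.sortedLT_sort A).pairwise
      exact List.IsChain.imp (fun a c h => fun _ => h) hp.isChain
    refine List.IsChain.append h1 (ih (fun B hB => hne B (by simp [hB])) (!b)) ?_
    intro x hx y hy
    have hx' : x.2 = b := by
      have := List.mem_of_mem_getLast? hx
      simp only [List.mem_map] at this
      obtain ⟨v, _, rfl⟩ := this
      rfl
    have hy' : y.2 = !b := go_head?_sign (fun B hB => hne B (by simp [hB])) (!b) y hy
    intro hsame
    rw [hx', hy'] at hsame
    exact absurd hsame (by cases b <;> simp)

/-- prefixes of a flatten are wedged between flattens of prefixes -/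
lemma take_flatten_bounds {α : Type*} (Ls : List (List α)) (k : ℕ) :
    ∃ j, (∀ x ∈ (Ls.take j).flatten, x ∈ Ls.flatten.take k) ∧
      (∀ x ∈ Ls.flatten.take k, x ∈ (Ls.take (j + 1)).flatten) := by
  induction Ls generalizing k with
  | nil => exact ⟨0, by simp, by simp⟩
  | cons s rest ih =>
    rcases le_or_gt k s.length with h | h
    · refine ⟨0, by simp, ?_⟩
      intro x hx
      rw [List.flatten_cons, List.take_append,
        Nat.sub_eq_zero_of_le h, List.take_zero, List.append_nil] at hx
      simp only [List.take_succ_cons, List.take_zero, List.flatten_cons,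
        List.flatten_nil, List.append_nil]
      exact List.mem_of_mem_take hx
    · obtain ⟨j, h1, h2⟩ := ih (k - s.length)
      refine ⟨j + 1, ?_, ?_⟩
      · intro x hx
        rw [List.take_succ_cons, List.flatten_cons, List.mem_append] at hx
        rw [List.flatten_cons, List.take_append,
          List.take_of_length_le (le_of_lt h), List.mem_append]
        rcases hx with hx | hx
        · exact Or.inl hx
        · exact Or.inr (h1 x hx)
      · intro x hx
        rw [List.flatten_cons, List.take_append,
          List.take_of_length_le (le_of_lt h), List.mem_append] at hx
        rw [List.take_succ_cons, List.flatten_cons, List.mem_append]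
        rcases hx with hx | hx
        · exact Or.inl hx
        · exact Or.inr (h2 x hx)

lemma mem_prefixUnion_iff {L : List (Finset (Fin n))} {i : ℕ} {x : Fin n} :
    x ∈ prefixUnion n L i ↔ x ∈ ((L.map desc).take (i + 1)).flatten := by
  rw [prefixUnion, ← List.map_take]
  simp only [List.mem_flatten, List.mem_map]
  rw [mem_foldr_union]
  constructor
  · rintro ⟨A, hA, hx⟩
    exact ⟨desc A, ⟨A, hA, rfl⟩, mem_desc.2 hx⟩
  · rintro ⟨d, ⟨A, hA, rfl⟩, hx⟩
    exact ⟨A, hA, mem_desc.1 hx⟩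


lemma mem_prefixUnion_of {L : List (Finset (Fin n))} {t i : ℕ} (ht : t < L.length)
    (hti : t ≤ i) {m : Fin n} (hm : m ∈ L[t]) : m ∈ prefixUnion n L i := by
  rw [prefixUnion, mem_foldr_union]
  refine ⟨L[t], ?_, hm⟩
  have h1 : t < (L.take (i + 1)).length := by
    rw [List.length_take]; omega
  have h2 : (L.take (i + 1))[t] = L[t] := List.getElem_take
  exact h2 ▸ List.getElem_mem h1

lemma of_mem_prefixUnion {L : List (Finset (Fin n))} {i : ℕ} {m : Fin n}
    (h : m ∈ prefixUnion n L i) : ∃ t, ∃ ht : t < L.length, t ≤ i ∧ m ∈ L[t] := by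
  rw [prefixUnion, mem_foldr_union] at h
  obtain ⟨A, hA, hmA⟩ := h
  obtain ⟨t, ht, hAt⟩ := List.mem_iff_getElem.1 hA
  rw [List.length_take] at ht
  have htL : t < L.length := by omega
  have : (L.take (i + 1))[t] = L[t] := List.getElem_take
  exact ⟨t, htL, by omega, by rw [← this, hAt]; exact hmA⟩

lemma minpos_of_odd {L : List (Finset (Fin n))} (hop : IsOP n L) (hom : OddMinima n L) :
    MinPosL n (go true L) := by
  intro i0 hi0 m hm
  obtain ⟨hmem, hmin⟩ := hm
  have hPl : ((go true L).take (i0 + 1)).map Prod.fst =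
      ((L.map desc).flatten).take (i0 + 1) := by
    rw [List.map_take, go_map_fst]
  rw [hPl] at hmem hmin
  obtain ⟨j, hj1, hj2⟩ := take_flatten_bounds (L.map desc) (i0 + 1)
  have hmj := hj2 m hmem
  rw [List.mem_flatten] at hmj
  obtain ⟨d, hd, hmd⟩ := hmj
  obtain ⟨t, ht, hdt⟩ := List.mem_iff_getElem.1 hd
  rw [List.length_take, List.length_map] at ht
  have htL : t < L.length := by omega
  have htj : t ≤ j := by omega
  have hdesc : d = desc L[t] := by
    rw [← hdt, List.getElem_take, List.getElem_map]
  have hmt : m ∈ L[t] := mem_desc.1 (hdesc ▸ hmd)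
  have hUne : (prefixUnion n L t).Nonempty := ⟨m, mem_prefixUnion_of htL le_rfl hmt⟩
  set m' := (prefixUnion n L t).min' hUne with hm'
  obtain ⟨t', ht', ht'le, hmt'⟩ := of_mem_prefixUnion (Finset.min'_mem _ hUne)
  have htt : t' = t := by
    by_contra hne
    have ht'lt : t' < t := lt_of_le_of_ne ht'le hne
    have hm'p : m' ∈ ((L.map desc).flatten).take (i0 + 1) := by
      apply hj1
      rw [List.mem_flatten]
      have h1 : t' < ((L.map desc).take j).length := by
        rw [List.length_take, List.length_map]; omega
      refine ⟨((L.map desc).take j)[t'], List.getElem_mem h1, ?_⟩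
      rw [List.getElem_take, List.getElem_map]
      exact mem_desc.2 hmt'
    have h1 : m ≤ m' := hmin m' hm'p
    have h2 : m' ≤ m := Finset.min'_le _ m (mem_prefixUnion_of htL le_rfl hmt)
    have heq : (prefixUnion n L t).min' hUne = m := le_antisymm h2 h1
    rw [heq] at hmt'
    exact hne (blocks_disjoint_getElem hop.2.1 ht' htL hmt' hmt)
  subst htt
  obtain ⟨j', hj', hev, hmem'⟩ := hom t' ht' m'
    ⟨Finset.min'_mem _ hUne, fun x hx => Finset.min'_le _ x hx⟩
  have hjt : j' = t' := by
    refine blocks_disjoint_getElem hop.2.1 hj' ht' ?_ hmt'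
    simpa using hmem'
  have hpar : t' % 2 = 0 := Nat.even_iff.mp (hjt ▸ hev)
  have := mem_go_of htL hmt true
  simpa [hpar] using this

lemma odd_of_minpos {L : List (Finset (Fin n))} (hop : IsOP n L)
    (hmp : MinPosL n (go true L)) : OddMinima n L := by
  intro i hi m hm
  obtain ⟨hmU, hmin⟩ := hm
  have hmpre : m ∈ ((L.map desc).take (i + 1)).flatten := mem_prefixUnion_iff.1 hmU
  set pre := ((L.map desc).take (i + 1)).flatten with hpre
  have hkpos : 0 < pre.length := List.length_pos_iff.2 (List.ne_nil_of_mem hmpre)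
  have htake : ((go true L).map Prod.fst).take pre.length = pre := by
    rw [go_map_fst]
    conv_lhs => rw [← List.take_append_drop (i + 1) (L.map desc), List.flatten_append]
    exact List.take_left
  have hlen : pre.length ≤ (go true L).length := by
    have h := congrArg List.length htake
    rw [List.length_take, List.length_map] at h
    omega
  have h1 : pre.length - 1 < (go true L).length := by omega
  have h2 : pre.length - 1 + 1 = pre.length := by omega
  have happ := hmp (pre.length - 1) h1 m ?_
  · obtain ⟨i', hi', hmi', hc⟩ := of_mem_go happ
    have hpar : i' % 2 = 0 := by
      rcases Nat.mod_two_eq_zero_or_one i' with h | h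
      · exact h
      · simp [h] at hc
    exact ⟨i', hi', Nat.even_iff.2 hpar, hmi'⟩
  · constructor
    · rw [h2, List.map_take, htake]
      exact hmpre
    · intro x hx
      rw [h2, List.map_take, htake] at hx
      exact hmin x (mem_prefixUnion_iff.2 hx)

/-- inverse map: split into maximal sign runs -/
def signedToOp : List (Fin n × Bool) → List (Finset (Fin n))
  | [] => []
  | a :: t =>
    ((((a :: t)).takeWhile (fun q => q.2 == a.2)).map Prod.fst).toFinset ::
      signedToOp (((a :: t)).dropWhile (fun q => q.2 == a.2))
  termination_by l => l.length
  decreasing_by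
    simp only [List.dropWhile_cons]
    rw [if_pos (by simp)]
    exact Nat.lt_succ_of_le (List.dropWhile_suffix _).sublist.length_le

@[simp] lemma signedToOp_nil : signedToOp ([] : List (Fin n × Bool)) = [] := by
  rw [signedToOp]

lemma takeWhile_dropWhile_append {α : Type*} (p : α → Bool) :
    ∀ (l₁ l₂ : List α), (∀ x ∈ l₁, p x = true) → (∀ y ∈ l₂.head?, p y = false) →
      (l₁ ++ l₂).takeWhile p = l₁ ∧ (l₁ ++ l₂).dropWhile p = l₂ := by
  intro l₁ l₂ h1 h2
  induction l₁ with
  | nil =>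
    cases l₂ with
    | nil => simp
    | cons y t =>
      have := h2 y (by simp)
      simp [List.takeWhile_cons, List.dropWhile_cons, this]
  | cons x t ih =>
    have hx := h1 x (by simp)
    have := ih (fun z hz => h1 z (by simp [hz]))
    simp [List.takeWhile_cons, List.dropWhile_cons, hx, this.1, this.2]

lemma signedToOp_go {L : List (Finset (Fin n))} (hne : ∀ A ∈ L, A.Nonempty) (b : Bool) :
    signedToOp (go b L) = L := by
  induction L generalizing b with
  | nil => show signedToOp [] = []; exact signedToOp_nil
  | cons A T ih =>
    obtain ⟨v, d, hA⟩ : ∃ v d, desc A = v :: d := by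
      cases h : desc A with
      | nil => exact absurd h (desc_ne_nil (hne A (by simp)))
      | cons v d => exact ⟨v, d, rfl⟩
    have hgo : go b (A :: T) = (v, b) :: (d.map (fun x => (x, b)) ++ go (!b) T) := by
      simp [go, hA]
    have hall : ∀ x ∈ ((v, b) :: d.map (fun x => (x, b))),
        (fun q : Fin n × Bool => q.2 == b) x = true := by
      intro x hx
      rcases List.mem_cons.1 hx with rfl | hx
      · simp
      · obtain ⟨y, _, rfl⟩ := List.mem_map.1 hx
        simp
    have hhd : ∀ y ∈ (go (!b) T).head?,
        (fun q : Fin n × Bool => q.2 == b) y = false := by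
      intro y hy
      have := go_head?_sign (fun B hB => hne B (by simp [hB])) (!b) y hy
      simp [this]
    have hsplit := takeWhile_dropWhile_append (fun q : Fin n × Bool => q.2 == b)
      ((v, b) :: d.map (fun x => (x, b))) (go (!b) T) hall hhd
    rw [hgo]
    rw [signedToOp]
    have hco : (v, b) :: (d.map (fun x => (x, b)) ++ go (!b) T)
        = ((v, b) :: d.map (fun x => (x, b))) ++ go (!b) T := by simp
    rw [hco, hsplit.1, hsplit.2]
    congr 1
    · have hmapfst : (((v, b) :: d.map (fun x => (x, b))).map Prod.fst) = v :: d := by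
        simp [List.map_map, Function.comp_def]
      rw [hmapfst, ← hA]
      rw [desc, List.toFinset_reverse, Finset.sort_toFinset]
    · exact ih (fun B hB => hne B (by simp [hB])) (!b)

lemma go_signedToOp : ∀ (N : ℕ) (l : List (Fin n × Bool)), l.length ≤ N → ∀ b : Bool,
    (∀ a ∈ l.head?, a.2 = b) → List.Chain' DR l → go b (signedToOp l) = l := by
  intro N
  induction N with
  | zero =>
    intro l hl b _ _
    rw [List.length_eq_zero_iff.1 (Nat.le_zero.1 hl), signedToOp_nil]
    rfl
  | succ N ihN =>
    intro l hl b hh hc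
    cases l with
    | nil => rw [signedToOp_nil]; rfl
    | cons a t =>
      have hab : a.2 = b := hh a rfl
      have hdw : (a :: t).dropWhile (fun q : Fin n × Bool => q.2 == a.2)
          = t.dropWhile (fun q : Fin n × Bool => q.2 == a.2) := by
        rw [List.dropWhile_cons, if_pos (by simp)]
      have hrest_len : ((a :: t).dropWhile (fun q : Fin n × Bool => q.2 == a.2)).length ≤ N := by
        rw [hdw]
        have h1 := (List.dropWhile_suffix (l := t)
          (fun q : Fin n × Bool => q.2 == a.2)).sublist.length_le
        have h2 : t.length ≤ N := by simpa using hl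
        omega
      -- Claim B
      have hB : go (!b) (signedToOp ((a :: t).dropWhile (fun q : Fin n × Bool => q.2 == a.2)))
          = (a :: t).dropWhile (fun q : Fin n × Bool => q.2 == a.2) := by
        refine ihN _ hrest_len (!b) ?_ (hc.suffix (List.dropWhile_suffix _))
        intro y hy
        have h := List.head?_dropWhile_not (fun q : Fin n × Bool => q.2 == a.2) (a :: t)
        rw [Option.mem_def] at hy
        rw [hy] at h
        have : (y.2 == a.2) = false := h
        rw [hab] at this
        cases hyb : y.2 <;> cases b <;> simp_all
      -- Claim A
      set run := (a :: t).takeWhile (fun q : Fin n × Bool => q.2 == a.2) with hrun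
      have hsign : ∀ q ∈ run, q.2 = b := by
        intro q hq
        have := List.mem_takeWhile_imp hq
        rw [hab] at this
        simpa using this
      have hchain : List.Chain' (fun x y : Fin n × Bool => y.1 < x.1) run := by
        have hcr : List.Chain' DR run := hc.prefix (List.takeWhile_prefix _)
        rw [List.Chain', List.isChain_iff_getElem] at hcr ⊢
        intro i hilen
        refine hcr i hilen ?_
        rw [hsign _ (List.getElem_mem _), hsign _ (List.getElem_mem _)]
      have hd : List.Pairwise (· > ·) (run.map Prod.fst) := by
        rw [← List.isChain_iff_pairwise, List.isChain_map]
        exact hchain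
      have hnodup : (run.map Prod.fst).Nodup := hd.imp ne_of_gt
      have hsorted_rev : List.Pairwise (· ≤ ·) (run.map Prod.fst).reverse := by
        rw [List.pairwise_reverse]
        exact hd.imp le_of_lt
      have hperm : (run.map Prod.fst).toFinset.sort (· ≤ ·) = (run.map Prod.fst).reverse := by
        refine List.Perm.eq_of_pairwise' (Finset.pairwise_sort _ _) hsorted_rev
          (List.perm_of_nodup_nodup_toFinset_eq (Finset.sort_nodup _ _)
            (by simpa using hnodup)
            (by rw [Finset.sort_toFinset, List.toFinset_reverse]))
      have hdesc : desc ((run.map Prod.fst).toFinset) = run.map Prod.fst := by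
        rw [desc, hperm, List.reverse_reverse]
      have hA : (desc ((run.map Prod.fst).toFinset)).map (fun v => (v, b)) = run := by
        rw [hdesc, List.map_map]
        have : run.map ((fun v => (v, b)) ∘ Prod.fst) = run.map id := by
          refine List.map_congr_left ?_
          intro q hq
          have := hsign q hq
          simp [Function.comp]
          exact Prod.ext rfl (by rw [this])
        rw [this, List.map_id]
      rw [signedToOp]
      show (desc ((run.map Prod.fst).toFinset)).map (fun v => (v, b)) ++
        go (!b) (signedToOp ((a :: t).dropWhile (fun q : Fin n × Bool => q.2 == a.2))) = a :: t
      rw [hA, hB]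
      exact List.takeWhile_append_dropWhile

lemma signedToOp_nonempty : ∀ (N : ℕ) (l : List (Fin n × Bool)), l.length ≤ N →
    ∀ A ∈ signedToOp l, A.Nonempty := by
  intro N
  induction N with
  | zero =>
    intro l hl
    rw [List.length_eq_zero_iff.1 (Nat.le_zero.1 hl)]
    intro A hA
    simp [signedToOp] at hA
  | succ N ih =>
    intro l hl A hA
    cases l with
    | nil => simp [signedToOp] at hA
    | cons a t =>
      rw [signedToOp] at hA
      rcases List.mem_cons.1 hA with rfl | hA
      · refine ⟨a.1, ?_⟩
        rw [List.mem_toFinset]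
        apply List.mem_map_of_mem
        rw [List.takeWhile_cons, if_pos (by simp)]
        simp
      · refine ih _ ?_ A hA
        rw [List.dropWhile_cons, if_pos (by simp)]
        have h1 := (List.dropWhile_suffix (l := t)
          (fun q : Fin n × Bool => q.2 == a.2)).sublist.length_le
        have h2 : t.length ≤ N := by simpa using hl
        omega

lemma forward {L : List (Finset (Fin n))} (hop : IsOP n L) (hom : OddMinima n L) :
    IsSP n (go true L) ∧ DecBlocks n (go true L) ∧ MinPosL n (go true L) := by
  obtain ⟨hne, hd, hu⟩ := hop
  refine ⟨⟨?_, ?_⟩, decBlocks_iff_chain'.2 (go_chain' hne true),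
    minpos_of_odd ⟨hne, hd, hu⟩ hom⟩
  · rw [go_length hd true, hu, Finset.card_univ, Fintype.card_fin]
  · rw [go_map_fst, List.nodup_flatten]
    constructor
    · intro d hdm
      obtain ⟨A, _, rfl⟩ := List.mem_map.1 hdm
      exact desc_nodup A
    · rw [List.pairwise_map]
      refine hd.imp ?_
      intro A B hAB x hxA hxB
      exact (Finset.disjoint_left.1 hAB (mem_desc.1 hxA)) (mem_desc.1 hxB)

lemma backward {l : List (Fin n × Bool)} (hsp : IsSP n l) (hdec : DecBlocks n l)
    (hmp : MinPosL n l) :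
    (IsOP n (signedToOp l) ∧ OddMinima n (signedToOp l)) ∧ go true (signedToOp l) = l := by
  have hgol : go true (signedToOp l) = l := by
    cases l with
    | nil => rw [signedToOp_nil]; rfl
    | cons a t =>
      have hlen0 : 0 < (a :: t).length := by simp
      have h := hmp 0 hlen0 a.1 ⟨by simp, by intro x hx; simp at hx; simp [hx]⟩
      have ha2 : a = (a.1, true) :=
        List.inj_on_of_nodup_map hsp.2 List.mem_cons_self h rfl
      refine go_signedToOp (a :: t).length (a :: t) le_rfl true ?_
        (decBlocks_iff_chain'.1 hdec)
      intro y hy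
      rw [Option.mem_def, List.head?_cons, Option.some.injEq] at hy
      rw [← hy, ha2]
  have hne : ∀ A ∈ signedToOp l, A.Nonempty := signedToOp_nonempty l.length l le_rfl
  have hvals : ((signedToOp l).map desc).flatten = l.map Prod.fst := by
    rw [← go_map_fst true, hgol]
  have hnod : ((signedToOp l).map desc).flatten.Nodup := by rw [hvals]; exact hsp.2
  have hdisj : (signedToOp l).Pairwise Disjoint := by
    have h := (List.nodup_flatten.1 hnod).2
    rw [List.pairwise_map] at h
    refine h.imp ?_
    intro A B hAB
    rw [Finset.disjoint_left]
    intro x hxA hxB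
    exact hAB (mem_desc.2 hxA) (mem_desc.2 hxB)
  have huniv : (signedToOp l).foldr (· ∪ ·) ∅ = Finset.univ := by
    apply Finset.eq_univ_of_forall
    intro x
    rw [mem_foldr_union]
    have hxl : x ∈ l.map Prod.fst := by
      have hcard : (l.map Prod.fst).toFinset = Finset.univ := by
        apply Finset.eq_univ_of_card
        rw [List.toFinset_card_of_nodup hsp.2, List.length_map, hsp.1, Fintype.card_fin]
      rw [← List.mem_toFinset, hcard]
      exact Finset.mem_univ x
    rw [← hvals, List.mem_flatten] at hxl
    obtain ⟨d, hd, hxd⟩ := hxl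
    obtain ⟨A, hA, rfl⟩ := List.mem_map.1 hd
    exact ⟨A, hA, mem_desc.1 hxd⟩
  have hop : IsOP n (signedToOp l) := ⟨hne, hdisj, huniv⟩
  exact ⟨⟨hop, odd_of_minpos hop (by rw [hgol]; exact hmp)⟩, hgol⟩

end OpSp
/-- The ordered partitions of `[n]` all of whose left-to-right minima occur at
odd locations are in bijection with the signed permutations of `[n]` with
decreasing blocks all of whose left-to-right minima have positive signs, via
the explicit map `opToSigned`. -/
theorem op_equiv_signedPerm (n : ℕ) :
    ∃ e : {L : List (Finset (Fin n)) // IsOP n L ∧ OddMinima n L} ≃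
        {l : List (Fin n × Bool) // IsSP n l ∧ DecBlocks n l ∧ MinPosL n l},
      ∀ L, (e L).val = opToSigned n L.val := by
  classical
  have hfwd : ∀ L : {L : List (Finset (Fin n)) // IsOP n L ∧ OddMinima n L},
      IsSP n (opToSigned n L.val) ∧ DecBlocks n (opToSigned n L.val) ∧
        MinPosL n (opToSigned n L.val) := by
    intro L
    rw [OpSp.opToSigned_eq_go]
    exact OpSp.forward L.2.1 L.2.2
  refine ⟨Equiv.ofBijective (fun L => ⟨opToSigned n L.val, hfwd L⟩) ⟨?_, ?_⟩, fun L => rfl⟩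
  · intro L1 L2 h
    apply Subtype.ext
    have h' : OpSp.go true L1.val = OpSp.go true L2.val := by
      rw [← OpSp.opToSigned_eq_go, ← OpSp.opToSigned_eq_go]
      exact congrArg Subtype.val h
    calc L1.val = OpSp.signedToOp (OpSp.go true L1.val) :=
          (OpSp.signedToOp_go L1.2.1.1 true).symm
      _ = OpSp.signedToOp (OpSp.go true L2.val) := by rw [h']
      _ = L2.val := OpSp.signedToOp_go L2.2.1.1 true
  · rintro ⟨l, hsp, hdec, hmp⟩
    obtain ⟨⟨hop, hodd⟩, hgol⟩ := OpSp.backward hsp hdec hmp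
    refine ⟨⟨OpSp.signedToOp l, hop, hodd⟩, ?_⟩
    apply Subtype.ext
    show opToSigned n (OpSp.signedToOp l) = l
    rw [OpSp.opToSigned_eq_go]
    exact hgol
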